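/- Let R be a commutative integral domain with fraction field K, let k be a field, and let φ : R → k be a ring homomorphism. Let C be a finite free R-module and ∂ : C → C an R-linear map with ∂ ∘ ∂ = 0. Then dim_k ( ker(∂_k) / range(∂_k) ) ≥ dim_K ( ker(∂_K) / range(∂_K) ), where ∂_k and ∂_K denote the endomorphisms of C ⊗_R k and C ⊗_R K obtained from ∂ by base change along φ and along the canonical map R → K respectively. -/

import Mathlib

/-- The homology of a differential module `(C, ∂)`: `ker ∂` modulo `range ∂`
(pulled back to a submodule of `ker ∂`). -/
noncomputable def homologyOf {S C : Type*} [CommRing S] [AddCommGroup C] [Module S C]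
    (d : C →ₗ[S] C) : Type _ :=
  (LinearMap.ker d) ⧸ ((LinearMap.range d).comap (LinearMap.ker d).subtype)

noncomputable instance {S C : Type*} [CommRing S] [AddCommGroup C] [Module S C]
    (d : C →ₗ[S] C) : AddCommGroup (homologyOf d) :=
  inferInstanceAs (AddCommGroup
    ((LinearMap.ker d) ⧸ ((LinearMap.range d).comap (LinearMap.ker d).subtype)))

noncomputable instance {S C : Type*} [CommRing S] [AddCommGroup C] [Module S C]
    (d : C →ₗ[S] C) : Module S (homologyOf d) :=
  inferInstanceAs (Module S
    ((LinearMap.ker d) ⧸ ((LinearMap.range d).comap (LinearMap.ker d).subtype)))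


open Module Matrix Submodule TensorProduct

/-- From a finite family of vectors over a field, pick a linearly independent
subfamily whose size is the dimension of the span. -/
lemma pick_subfamily {F V n : Type*} [Field F] [AddCommGroup V] [Module F V] [Fintype n]
    (v : n → V) :
    ∃ s : Finset n, s.card = finrank F (span F (Set.range v)) ∧
      LinearIndependent F (fun i : s => v i) := by
  classical
  obtain ⟨b, hb, hsp, hli⟩ := exists_linearIndependent F (Set.range v)
  have hbfin : b.Finite := (Set.finite_range v).subset hb
  haveI : Fintype b := hbfin.fintype
  have hchoice : ∀ x : b, ∃ i : n, v i = x := fun x => hb x.2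
  choose g hg using hchoice
  have hginj : Function.Injective g := fun x y hxy => by
    apply Subtype.ext; rw [← hg x, ← hg y, hxy]
  refine ⟨Finset.univ.image g, ?_, ?_⟩
  · rw [Finset.card_image_of_injective _ hginj, Finset.card_univ, ← hsp,
      finrank_span_set_eq_card hli, Set.toFinset_card]
  · have hmem : ∀ i : (Finset.univ.image g : Finset n), v i ∈ b := by
      rintro ⟨i, hi⟩
      simp only [Finset.mem_image, Finset.mem_univ, true_and] at hi
      obtain ⟨x, rfl⟩ := hi
      rw [hg x]; exact x.2
    have hvinj : ∀ i j : (Finset.univ.image g : Finset n), v i = v j → i = j := by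
      rintro ⟨i, hi⟩ ⟨j, hj⟩ hij
      simp only [Finset.mem_image, Finset.mem_univ, true_and] at hi hj
      obtain ⟨x, rfl⟩ := hi
      obtain ⟨y, rfl⟩ := hj
      have hxy : x = y := Subtype.ext (by rw [← hg x, ← hg y]; exact hij)
      subst hxy; rfl
    exact hli.comp (fun i : (Finset.univ.image g : Finset n) => (⟨v i, hmem i⟩ : b))
      (fun i j h => hvinj i j (congrArg Subtype.val h))

/-- Rank semicontinuity: the rank of a matrix mapped to a field `k` is at most
its rank mapped along an injective hom to a field `K`. -/
lemma matrix_rank_map_le {n R k K : Type*} [Fintype n] [DecidableEq n] [CommRing R]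
    [Field k] [Field K] (φ : R →+* k) (ι : R →+* K) (hι : Function.Injective ι)
    (M : Matrix n n R) : (M.map φ).rank ≤ (M.map ι).rank := by
  classical
  obtain ⟨s, hs, hliS⟩ := pick_subfamily (F := k) (fun j => (M.map φ)ᵀ j)
  set N : Matrix n s k := Matrix.of (fun i (j : s) => (M.map φ) i j) with hN
  have hcolsN : LinearIndependent k (fun j : s => Nᵀ j) := hliS
  have hrankN : N.rank = s.card := by
    rw [rank_eq_finrank_span_cols]
    exact (finrank_span_eq_card hcolsN).trans (Fintype.card_coe _)
  have hrowsN : finrank k (span k (Set.range (fun i : n => N i))) = s.card := by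
    have h := rank_eq_finrank_span_cols Nᵀ
    rw [rank_transpose, hrankN] at h
    exact h.symm
  obtain ⟨t, ht, hliT⟩ := pick_subfamily (F := k) (fun i : n => N i)
  rw [hrowsN] at ht
  have e : (t : Type _) ≃ (s : Type _) :=
    Fintype.equivOfCardEq (by rw [Fintype.card_coe, Fintype.card_coe, ht])
  set P : Matrix s s R :=
    M.submatrix (fun i : s => ((e.symm i : t) : n)) (fun j : s => (j : n)) with hP
  have hrows : LinearIndependent k (fun i : s => (P.map φ) i) :=
    hliT.comp e.symm e.symm.injective
  have hUnitk : IsUnit (P.map φ) := linearIndependent_rows_iff_isUnit.mp hrows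
  have hmapdet1 : (P.map φ).det = φ P.det := (RingHom.map_det φ P).symm
  have hmapdet2 : (P.map ι).det = ι P.det := (RingHom.map_det ι P).symm
  have hdetP : P.det ≠ 0 := by
    intro h0
    have hne : (P.map φ).det ≠ 0 :=
      isUnit_iff_ne_zero.mp ((Matrix.isUnit_iff_isUnit_det _).mp hUnitk)
    rw [hmapdet1, h0, map_zero] at hne
    exact hne rfl
  have hUnitK : IsUnit (P.map ι) := by
    rw [Matrix.isUnit_iff_isUnit_det, hmapdet2, isUnit_iff_ne_zero]
    intro h0
    exact hdetP (hι (by rw [h0, map_zero]))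
  have hcolsK : LinearIndependent K (fun j : s => (P.map ι)ᵀ j) :=
    linearIndependent_cols_iff_isUnit.mpr hUnitK
  have hliC : LinearIndependent K (fun j : s => (M.map ι)ᵀ (j : n)) := by
    apply LinearIndependent.of_comp
      (LinearMap.funLeft K K (fun i : s => ((e.symm i : t) : n)))
    exact hcolsK
  calc (M.map φ).rank = s.card := by
        rw [rank_eq_finrank_span_cols]; exact hs.symm
    _ = finrank K (span K (Set.range (fun j : s => (M.map ι)ᵀ (j : n)))) := by
        rw [finrank_span_eq_card hliC, Fintype.card_coe]
    _ ≤ finrank K (span K (Set.range (M.map ι)ᵀ)) := by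
        apply Submodule.finrank_mono
        apply Submodule.span_mono
        rintro x ⟨j, rfl⟩
        exact ⟨j, rfl⟩
    _ = (M.map ι).rank := (rank_eq_finrank_span_cols _).symm

lemma finrank_homologyOf_test {F V : Type*} [Field F] [AddCommGroup V] [Module F V]
    [FiniteDimensional F V] (f : V →ₗ[F] V) (hf : f ∘ₗ f = 0) :
    finrank F ((LinearMap.ker f) ⧸ ((LinearMap.range f).comap (LinearMap.ker f).subtype))
      + 2 * finrank F (LinearMap.range f) = finrank F V := by
  have hle : LinearMap.range f ≤ LinearMap.ker f := by
    rintro x ⟨y, rfl⟩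
    have := LinearMap.congr_fun hf y
    simpa [LinearMap.mem_ker] using this
  have h1 := Submodule.finrank_quotient_add_finrank
    ((LinearMap.range f).comap (LinearMap.ker f).subtype)
  have h2 : finrank F ((LinearMap.range f).comap (LinearMap.ker f).subtype)
      = finrank F (LinearMap.range f) :=
    (Submodule.comapSubtypeEquivOfLe hle).finrank_eq
  have h3 := LinearMap.finrank_range_add_finrank_ker f
  omega

lemma finrank_homologyOf' {F V : Type*} [Field F] [AddCommGroup V] [Module F V]
    [FiniteDimensional F V] (f : V →ₗ[F] V) (hf : f ∘ₗ f = 0) :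
    finrank F (homologyOf f) + 2 * finrank F (LinearMap.range f) = finrank F V := by
  show finrank F ((LinearMap.ker f) ⧸ ((LinearMap.range f).comap (LinearMap.ker f).subtype))
      + 2 * finrank F (LinearMap.range f) = finrank F V
  exact finrank_homologyOf_test f hf

private theorem stmt8_aux {R : Type*} [CommRing R] [IsDomain R]
    (k : Type*) [Field k] [Algebra R k]
    {C : Type*} [AddCommGroup C] [Module R C] [Module.Free R C] [Module.Finite R C]
    (d : C →ₗ[R] C) (hd : d ∘ₗ d = 0) :
    Module.finrank (FractionRing R)
        (homologyOf (LinearMap.baseChange (FractionRing R) d)) ≤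
      Module.finrank k (homologyOf (LinearMap.baseChange k d)) := by
  classical
  have hdK : (LinearMap.baseChange (FractionRing R) d) ∘ₗ (LinearMap.baseChange (FractionRing R) d) = 0 := by
    rw [← LinearMap.baseChange_comp, hd, LinearMap.baseChange_zero]
  have hdk : (LinearMap.baseChange k d) ∘ₗ (LinearMap.baseChange k d) = 0 := by
    rw [← LinearMap.baseChange_comp, hd, LinearMap.baseChange_zero]
  have hK1 := finrank_homologyOf' (LinearMap.baseChange (FractionRing R) d) hdK
  have hk1 := finrank_homologyOf' (LinearMap.baseChange k d) hdk
  have hfrK : finrank (FractionRing R) ((FractionRing R) ⊗[R] C) = finrank R C := Module.finrank_baseChange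
  have hfrk : finrank k (k ⊗[R] C) = finrank R C := Module.finrank_baseChange
  set b := Module.Free.chooseBasis R C with hb
  have hrk : ((LinearMap.toMatrix b b d).map (algebraMap R k)).rank
      = finrank k (LinearMap.range (LinearMap.baseChange k d)) := by
    rw [← LinearMap.toMatrix_baseChange,
      Matrix.rank_eq_finrank_range_toLin _ (Algebra.TensorProduct.basis k b)
        (Algebra.TensorProduct.basis k b), Matrix.toLin_toMatrix]
  have hrK : ((LinearMap.toMatrix b b d).map (algebraMap R (FractionRing R))).rank
      = finrank (FractionRing R) (LinearMap.range (LinearMap.baseChange (FractionRing R) d)) := by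
    rw [← LinearMap.toMatrix_baseChange,
      Matrix.rank_eq_finrank_range_toLin _ (Algebra.TensorProduct.basis (FractionRing R) b)
        (Algebra.TensorProduct.basis (FractionRing R) b), Matrix.toLin_toMatrix]
  have hle : finrank k (LinearMap.range (LinearMap.baseChange k d))
      ≤ finrank (FractionRing R) (LinearMap.range (LinearMap.baseChange (FractionRing R) d)) := by
    rw [← hrk, ← hrK]
    exact matrix_rank_map_le (algebraMap R k) (algebraMap R (FractionRing R))
      (IsFractionRing.injective R (FractionRing R)) _
  omega

/-- For a finite free module `C` over a domain `R` with fraction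
field `K`, a differential `∂` with `∂ ∘ ∂ = 0`, and a ring homomorphism
(`R`-algebra structure) `φ : R → k` to a field `k`, the `k`-dimension of the
homology of the base change of `∂` to `k` is at least the `K`-dimension of the
homology of the base change to `K`. -/
theorem stmt8 {R : Type*} [CommRing R] [IsDomain R]
    (k : Type*) [Field k] [Algebra R k]
    {C : Type*} [AddCommGroup C] [Module R C] [Module.Free R C] [Module.Finite R C]
    (d : C →ₗ[R] C) (hd : d ∘ₗ d = 0) :
    Module.finrank (FractionRing R)
        (homologyOf (LinearMap.baseChange (FractionRing R) d)) ≤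
      Module.finrank k (homologyOf (LinearMap.baseChange k d)) := by
  exact stmt8_aux k d hd
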